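/- Let λ ∈ (0,1), α₀ = (1−λ)/(1+λ), a ∉ {α₀, α₀^{−1}}, and let Φ_a(z) = log(z^{−a}b_λ(z)). Then at each stationary point z_± one has Φ_a''(z_±) = λ(1−λ²)(z_± − z_∓) / ((z_± − λ)²(1 − λz_±)²). -/

import Mathlib

/-- At each stationary point `z_±`,
`Φ_a''(z_±) = λ(1−λ²)(z_± − z_∓)/((z_± − λ)²(1−λz_±)²)`, where
`Φ_a''(z) = −1/(z−λ)² + a/z² + λ²/(1−λz)²`. -/
lemma key (a l C z w : ℂ) (hsum : z + w = 2*C) (hmul : z*w = 1)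
    (hC : 2*l*a*C = a*(1+l^2) - (1-l^2)) (hll : (1:ℂ) - l^2 ≠ 0) :
    -1/(z-l)^2 + a/z^2 + l^2/(1-l*z)^2 = l*(1-l^2)*(z-w)/((z-l)^2*(1-l*z)^2) := by
  have hz : z ≠ 0 := left_ne_zero_of_mul_eq_one hmul
  have hzl : z - l ≠ 0 := by
    intro h
    apply hll
    linear_combination a*l*hsum + hC + a*w*h - a*l*h - a*hmul
  have hlz : (1:ℂ) - l*z ≠ 0 := by
    intro h
    apply hll
    linear_combination a*l*hsum + hC + a*h - a*l*w*h - a*l^2*hmul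
  have hq : a * (z - l) * (1 - l*z) = (1 - l^2) * z := by
    linear_combination (-(a*l))*(z*hsum - hmul) - z*hC
  set D : ℂ := z*((z-l)^2*(1-l*z)^2) with hDdef
  have hD : D ≠ 0 := mul_ne_zero hz (mul_ne_zero (pow_ne_zero 2 hzl) (pow_ne_zero 2 hlz))
  have e1 : -1/(z-l)^2 = (-z*(1-l*z)^2)/D := by
    rw [div_eq_div_iff (pow_ne_zero 2 hzl) hD]; ring
  have e2 : a/z^2 = ((1-l^2)*((z-l)*(1-l*z)))/D := by
    rw [div_eq_div_iff (pow_ne_zero 2 hz) hD]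
    linear_combination (z*(z-l)*(1-l*z))*hq
  have e3 : l^2/(1-l*z)^2 = (l^2*z*(z-l)^2)/D := by
    rw [div_eq_div_iff (pow_ne_zero 2 hlz) hD]; ring
  have e4 : l*(1-l^2)*(z-w)/((z-l)^2*(1-l*z)^2) = (l*(1-l^2)*(z-w)*z)/D := by
    rw [div_eq_div_iff (mul_ne_zero (pow_ne_zero 2 hzl) (pow_ne_zero 2 hlz)) hD]; ring
  rw [e1, e2, e3, e4, ← add_div, ← add_div, div_eq_div_iff hD hD]
  linear_combination (D*(l*(1-l^2)))*hmul

theorem stmt9 (l a : ℝ) (hl : l ∈ Set.Ioo (0 : ℝ) 1) (ha : 0 < a)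
    (ha1 : a ≠ (1 - l) / (1 + l)) (ha2 : a ≠ (1 + l) / (1 - l))
    (s zp zm : ℂ)
    (hs : s ^ 2 = (((a * (1 + l ^ 2) - (1 - l ^ 2)) / (2 * l * a) : ℝ) : ℂ) ^ 2 - 1)
    (hzp : zp = (((a * (1 + l ^ 2) - (1 - l ^ 2)) / (2 * l * a) : ℝ) : ℂ) + s)
    (hzm : zm = (((a * (1 + l ^ 2) - (1 - l ^ 2)) / (2 * l * a) : ℝ) : ℂ) - s) :
    (-1 / (zp - (l : ℂ)) ^ 2 + (a : ℂ) / zp ^ 2 + (l : ℂ) ^ 2 / (1 - (l : ℂ) * zp) ^ 2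
        = (l : ℂ) * (1 - (l : ℂ) ^ 2) * (zp - zm)
            / ((zp - (l : ℂ)) ^ 2 * (1 - (l : ℂ) * zp) ^ 2))
      ∧ (-1 / (zm - (l : ℂ)) ^ 2 + (a : ℂ) / zm ^ 2 + (l : ℂ) ^ 2 / (1 - (l : ℂ) * zm) ^ 2
        = (l : ℂ) * (1 - (l : ℂ) ^ 2) * (zm - zp)
            / ((zm - (l : ℂ)) ^ 2 * (1 - (l : ℂ) * zm) ^ 2)) := by
  obtain ⟨hl0, hl1⟩ := hl
  set C : ℂ := (((a * (1 + l ^ 2) - (1 - l ^ 2)) / (2 * l * a) : ℝ) : ℂ) with hCdef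
  have hlne : (l : ℝ) ≠ 0 := ne_of_gt hl0
  have hane : (a : ℝ) ≠ 0 := ne_of_gt ha
  have hC : 2*(l:ℂ)*(a:ℂ)*C = (a:ℂ)*(1+(l:ℂ)^2) - (1-(l:ℂ)^2) := by
    have hlC : (l:ℂ) ≠ 0 := Complex.ofReal_ne_zero.mpr hlne
    have haC : (a:ℂ) ≠ 0 := Complex.ofReal_ne_zero.mpr hane
    rw [hCdef]
    push_cast
    field_simp
  have hll : (1:ℂ) - (l:ℂ)^2 ≠ 0 := by
    intro h
    have : (1 : ℝ) - l^2 = 0 := by exact_mod_cast h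
    nlinarith
  have hsum : zp + zm = 2*C := by rw [hzp, hzm]; ring
  have hmul : zp * zm = 1 := by rw [hzp, hzm]; linear_combination -hs
  constructor
  · exact key a l C zp zm hsum hmul hC hll
  · have hsum' : zm + zp = 2*C := by rw [add_comm]; exact hsum
    have hmul' : zm * zp = 1 := by rw [mul_comm]; exact hmul
    exact key a l C zm zp hsum' hmul' hC hll
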